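/- Let f be Lipschitz in its second argument with constant L₁ and suppose h θ L₁ < 1. Let y* be the exact solution of the implicit equation y = c + hθ f(t', y, ν') where c = y_n + h(1−θ) f(t_n, y_n, ν_n), and let ỹ = c + hθ f(t', c + hθ f(t', c, ν'), ν') be the value produced by the 3-term NIM (two fixed-point iterations from c). Then |ỹ − y*| ≤ (hθL₁)² / (1 − hθL₁) · |hθ f(t', c, ν')|. -/

import Mathlib

theorem stmt_9 (f : ℝ → ℝ → ℝ → ℝ) (L₁ h θ : ℝ) (hL₁ : 0 < L₁) (hh : 0 < h)
    (hθ : θ ∈ Set.Ioc (0 : ℝ) 1) (hcontr : h * θ * L₁ < 1)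
    (hf : ∀ t u x₁ x₂, |f t x₁ u - f t x₂ u| ≤ L₁ * |x₁ - x₂|)
    (t' ν' c ystar : ℝ)
    (hstar : ystar = c + h * θ * f t' ystar ν') :
    |(c + h * θ * f t' (c + h * θ * f t' c ν') ν') - ystar| ≤
      (h * θ * L₁) ^ 2 / (1 - h * θ * L₁) * |h * θ * f t' c ν'| := by
  obtain ⟨hθ0, hθ1⟩ := hθ
  set q := h * θ * L₁ with hq
  have hq0 : 0 < q := by positivity
  set y1 := c + h * θ * f t' c ν' with hy1
  have hhθ : 0 ≤ h * θ := by positivity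
  -- key contraction steps
  have step : ∀ a b : ℝ, |(c + h * θ * f t' a ν') - (c + h * θ * f t' b ν')| ≤ q * |a - b| := by
    intro a b
    have : (c + h * θ * f t' a ν') - (c + h * θ * f t' b ν') =
        (h * θ) * (f t' a ν' - f t' b ν') := by ring
    rw [this, abs_mul, abs_of_nonneg hhθ, hq]
    calc h * θ * |f t' a ν' - f t' b ν'| ≤ h * θ * (L₁ * |a - b|) := by
          apply mul_le_mul_of_nonneg_left (hf t' ν' a b) hhθ
      _ = h * θ * L₁ * |a - b| := by ring
  have h1 : |y1 - ystar| ≤ q * |c - ystar| := by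
    calc |y1 - ystar| = |(c + h * θ * f t' c ν') - (c + h * θ * f t' ystar ν')| := by
          conv_rhs => rw [← hstar]
      _ ≤ q * |c - ystar| := step c ystar
  have h2 : |(c + h * θ * f t' y1 ν') - ystar| ≤ q * |y1 - ystar| := by
    calc |(c + h * θ * f t' y1 ν') - ystar|
        = |(c + h * θ * f t' y1 ν') - (c + h * θ * f t' ystar ν')| := by
          conv_rhs => rw [← hstar]
      _ ≤ q * |y1 - ystar| := step y1 ystar
  have hcys : |c - ystar| ≤ |y1 - c| / (1 - q) := by
    have htri : |c - ystar| ≤ |c - y1| + |y1 - ystar| := abs_sub_le c y1 ystar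
    rw [abs_sub_comm c y1] at htri
    have h1q : 0 < 1 - q := by linarith
    rw [le_div_iff₀ h1q]
    nlinarith [abs_nonneg (c - ystar)]
  have hy1c : |y1 - c| = |h * θ * f t' c ν'| := by
    have : y1 - c = h * θ * f t' c ν' := by rw [hy1]; ring
    rw [this]
  have h1q : 0 < 1 - q := by linarith
  calc |(c + h * θ * f t' y1 ν') - ystar| ≤ q * |y1 - ystar| := h2
    _ ≤ q * (q * |c - ystar|) := by
        apply mul_le_mul_of_nonneg_left h1 (le_of_lt hq0)
    _ ≤ q * (q * (|y1 - c| / (1 - q))) := by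
        apply mul_le_mul_of_nonneg_left _ (le_of_lt hq0)
        exact mul_le_mul_of_nonneg_left hcys (le_of_lt hq0)
    _ = q ^ 2 / (1 - q) * |y1 - c| := by field_simp
    _ = (h * θ * L₁) ^ 2 / (1 - h * θ * L₁) * |h * θ * f t' c ν'| := by rw [hy1c]
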